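/- Let A be a C*-algebra and L : A_sa → [0,∞] an extended seminorm on A_sa. Define L̃ : A_sa → [0,∞] by L̃(b) := inf{ C > 0 : |φ(b) − ψ(b)| ≤ C·d_L(φ, ψ) for all states φ, ψ on A } (the inequality read in [0,∞], so it holds automatically when d_L(φ, ψ) = ∞; inf ∅ := ∞). Then: (i) L̃(b) ≤ L(b) for every b ∈ A_sa; (ii) L̃ is lower semicontinuous with respect to the norm on A_sa; (iii) L̃ induces the same spectral distance as L, i.e. for all states φ, ψ on A, sup{ |φ(b) − ψ(b)| : b ∈ A_sa, L̃(b) ≤ 1 } = sup{ |φ(b) − ψ(b)| : b ∈ A_sa, L(b) ≤ 1 }. -/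

import Mathlib

open Filter Topology
open scoped ComplexOrder ENNReal NNReal MultiplierAlgebra

noncomputable section

/-- A *state* on a C⋆-algebra: a continuous linear functional into `ℂ` that is nonnegative
on nonnegative elements and has norm `1`. -/
def IsState {E : Type*} [NormedAddCommGroup E] [NormedSpace ℂ E] [PartialOrder E]
    (φ : E →L[ℂ] ℂ) : Prop :=
  (∀ a : E, 0 ≤ a → 0 ≤ φ a) ∧ ‖φ‖ = 1

variable {A : Type*} [NonUnitalCStarAlgebra A] [PartialOrder A] [StarOrderedRing A]

/-- `L` is an extended seminorm on the self-adjoint part `A_sa` of `A`: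
`L (t • b) = |t| * L b` for real `t`, and `L (b + b') ≤ L b + L b'`. -/
def IsESeminorm (L : selfAdjoint A → ℝ≥0∞) : Prop :=
  (∀ (t : ℝ) (b : selfAdjoint A), L (t • b) = (‖t‖₊ : ℝ≥0∞) * L b) ∧
    ∀ b b' : selfAdjoint A, L (b + b') ≤ L b + L b'

/-- The spectral distance `d_L(φ, ψ) = sup { |φ b - ψ b| : b ∈ A_sa, L b ≤ 1 }`,
valued in `[0, ∞]`. -/
def dL (L : selfAdjoint A → ℝ≥0∞) (φ ψ : A → ℂ) : ℝ≥0∞ :=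
  ⨆ b : {b : selfAdjoint A // L b ≤ 1}, (‖φ (b.1 : A) - ψ (b.1 : A)‖₊ : ℝ≥0∞)

/-- An approximate identity for `A`: a net `(I n)` with `0 ≤ I n`, `‖I n‖ ≤ 1`, and
`‖I n * a - a‖ → 0`, `‖a * I n - a‖ → 0` for every `a : A`. -/
def IsApproxUnit {ι : Type*} [Preorder ι] (I : ι → A) : Prop :=
  (∀ n, 0 ≤ I n) ∧ (∀ n, ‖I n‖ ≤ 1) ∧
    ∀ a : A, Tendsto (fun n => ‖I n * a - a‖) atTop (𝓝 0) ∧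
      Tendsto (fun n => ‖a * I n - a‖) atTop (𝓝 0)

/-- `L̃ b = inf { C > 0 : |φ b - ψ b| ≤ C · d_L(φ, ψ) for all states φ, ψ }`,
with `inf ∅ = ∞` and the inequality read in `[0, ∞]`. -/
def tildeL (L : selfAdjoint A → ℝ≥0∞) (b : selfAdjoint A) : ℝ≥0∞ :=
  sInf {C : ℝ≥0∞ | 0 < C ∧ C ≠ ⊤ ∧
    ∀ φ ψ : A →L[ℂ] ℂ, IsState φ → IsState ψ →
      (‖φ (b : A) - ψ (b : A)‖₊ : ℝ≥0∞) ≤ C * dL L ⇑φ ⇑ψ}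

lemma key_scale (L : selfAdjoint A → ℝ≥0∞) (hL : IsESeminorm L) (b : selfAdjoint A)
    {C : ℝ≥0∞} (h0 : C ≠ 0) (ht : C ≠ ⊤) (hb : L b ≤ C) (φ ψ : A →L[ℂ] ℂ) :
    (‖φ (b : A) - ψ (b : A)‖₊ : ℝ≥0∞) ≤ C * dL L ⇑φ ⇑ψ := by
  set c : ℝ≥0 := C.toNNReal with hcdef
  have hC : C = (c : ℝ≥0∞) := (ENNReal.coe_toNNReal ht).symm
  have hc0 : c ≠ 0 := by
    intro h; apply h0; rw [hC, h, ENNReal.coe_zero]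
  set r : ℝ := ((c : ℝ))⁻¹ with hrdef
  have hrn : ‖r‖₊ = c⁻¹ := by rw [hrdef, nnnorm_inv, NNReal.nnnorm_eq]
  set b' : selfAdjoint A := r • b with hb'def
  have hLb' : L b' ≤ 1 := by
    rw [hb'def, hL.1, hrn]
    calc ((c⁻¹ : ℝ≥0) : ℝ≥0∞) * L b ≤ (c⁻¹ : ℝ≥0) * (c : ℝ≥0) := by
          exact mul_le_mul_right (hC ▸ hb) _
      _ = ((c⁻¹ * c : ℝ≥0) : ℝ≥0∞) := by rw [ENNReal.coe_mul]
      _ = 1 := by rw [inv_mul_cancel₀ hc0, ENNReal.coe_one]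
  have hφ : φ (b' : A) - ψ (b' : A) = r • (φ (b : A) - ψ (b : A)) := by
    have : (b' : A) = r • (b : A) := by rw [hb'def]; exact selfAdjoint.val_smul r b
    rw [this, φ.map_smul_of_tower, ψ.map_smul_of_tower, smul_sub]
  have hterm : (‖φ (b' : A) - ψ (b' : A)‖₊ : ℝ≥0∞)
      = (c⁻¹ : ℝ≥0) * (‖φ (b : A) - ψ (b : A)‖₊ : ℝ≥0∞) := by
    rw [hφ, nnnorm_smul, hrn, ENNReal.coe_mul]
  have hd : ((c⁻¹ : ℝ≥0) : ℝ≥0∞) * (‖φ (b : A) - ψ (b : A)‖₊ : ℝ≥0∞) ≤ dL L ⇑φ ⇑ψ := by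
    rw [← hterm]
    exact le_iSup (fun x : {b : selfAdjoint A // L b ≤ 1} =>
      (‖φ (x.1 : A) - ψ (x.1 : A)‖₊ : ℝ≥0∞)) ⟨b', hLb'⟩
  calc (‖φ (b : A) - ψ (b : A)‖₊ : ℝ≥0∞)
      = (c : ℝ≥0∞) * (((c⁻¹ : ℝ≥0) : ℝ≥0∞) * ‖φ (b : A) - ψ (b : A)‖₊) := by
        rw [← mul_assoc, ← ENNReal.coe_mul, mul_inv_cancel₀ hc0, ENNReal.coe_one, one_mul]
    _ ≤ (c : ℝ≥0∞) * dL L ⇑φ ⇑ψ := mul_le_mul_right hd _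
    _ = C * dL L ⇑φ ⇑ψ := by rw [← hC]

lemma sInf_aux (m : ℝ≥0∞) : sInf {C : ℝ≥0∞ | 0 < C ∧ C ≠ ⊤ ∧ m ≤ C} = m := by
  apply le_antisymm
  · apply le_of_forall_gt_imp_ge_of_dense
    intro C hC
    by_cases hCt : C = ⊤
    · rw [hCt]; exact le_top
    · exact sInf_le ⟨(zero_le (a := m)).trans_lt hC, hCt, hC.le⟩
  · exact le_sInf fun C hC => hC.2.2

lemma tildeL_eq_sup (L : selfAdjoint A → ℝ≥0∞) (b : selfAdjoint A) :
    tildeL L b = ⨆ φ : {φ : A →L[ℂ] ℂ // IsState φ}, ⨆ ψ : {ψ : A →L[ℂ] ℂ // IsState ψ},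
      (‖φ.1 (b : A) - ψ.1 (b : A)‖₊ : ℝ≥0∞) / dL L ⇑φ.1 ⇑ψ.1 := by
  set M := ⨆ φ : {φ : A →L[ℂ] ℂ // IsState φ}, ⨆ ψ : {ψ : A →L[ℂ] ℂ // IsState ψ},
      (‖φ.1 (b : A) - ψ.1 (b : A)‖₊ : ℝ≥0∞) / dL L ⇑φ.1 ⇑ψ.1 with hM
  have hset : {C : ℝ≥0∞ | 0 < C ∧ C ≠ ⊤ ∧
      ∀ φ ψ : A →L[ℂ] ℂ, IsState φ → IsState ψ →
        (‖φ (b : A) - ψ (b : A)‖₊ : ℝ≥0∞) ≤ C * dL L ⇑φ ⇑ψ}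
      = {C : ℝ≥0∞ | 0 < C ∧ C ≠ ⊤ ∧ M ≤ C} := by
    ext C
    simp only [Set.mem_setOf_eq, hM, iSup_le_iff, Subtype.forall]
    constructor
    · rintro ⟨h0, ht, h⟩
      refine ⟨h0, ht, fun φ hφ ψ hψ => ?_⟩
      exact (ENNReal.div_le_iff_le_mul (Or.inr ht) (Or.inr h0.ne')).2 (h φ ψ hφ hψ)
    · rintro ⟨h0, ht, h⟩
      refine ⟨h0, ht, fun φ ψ hφ hψ => ?_⟩
      exact (ENNReal.div_le_iff_le_mul (Or.inr ht) (Or.inr h0.ne')).1 (h φ hφ ψ hψ)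
  rw [tildeL, hset, sInf_aux]

lemma lsc_aux (L : selfAdjoint A → ℝ≥0∞) (φ ψ : A →L[ℂ] ℂ) :
    LowerSemicontinuous (fun b : selfAdjoint A =>
      (‖φ (b : A) - ψ (b : A)‖₊ : ℝ≥0∞) / dL L ⇑φ ⇑ψ) := by
  set d := dL L ⇑φ ⇑ψ with hd
  have hf : Continuous (fun b : selfAdjoint A => (‖φ (b : A) - ψ (b : A)‖₊ : ℝ≥0∞)) := by
    refine ENNReal.continuous_coe.comp ?_
    exact continuous_nnnorm.comp ((φ.continuous.comp continuous_subtype_val).sub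
      (ψ.continuous.comp continuous_subtype_val))
  by_cases hd0 : d = 0
  · rw [hd0]
    intro b₀ y hy
    by_cases h0 : (‖φ (b₀ : A) - ψ (b₀ : A)‖₊ : ℝ≥0∞) = 0
    · simp only [h0, ENNReal.zero_div] at hy
      exact absurd hy (not_lt.2 (zero_le (a := y)))
    · have hev : ∀ᶠ b : selfAdjoint A in 𝓝 b₀,
          (‖φ (b : A) - ψ (b : A)‖₊ : ℝ≥0∞) ≠ 0 :=
        hf.continuousAt.eventually_ne h0
      filter_upwards [hev] with b hb
      show y < (‖φ (b : A) - ψ (b : A)‖₊ : ℝ≥0∞) / 0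
      rw [ENNReal.div_zero hb]
      exact hy.trans_le le_top
  · have heq : (fun b : selfAdjoint A => (‖φ (b : A) - ψ (b : A)‖₊ : ℝ≥0∞) / d)
        = fun b : selfAdjoint A => d⁻¹ * (‖φ (b : A) - ψ (b : A)‖₊ : ℝ≥0∞) := by
      funext b; rw [div_eq_mul_inv, mul_comm]
    rw [heq]
    exact ((ENNReal.continuous_const_mul (ENNReal.inv_ne_top.2 hd0)).comp hf).lowerSemicontinuous

/-- `L̃ ≤ L`, `L̃` is norm-lower semicontinuous, and `L̃` induces the same spectral
distance as `L` on states. -/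
theorem tildeL_le_and_lsc_and_same_dL (L : selfAdjoint A → ℝ≥0∞) (hL : IsESeminorm L) :
    (∀ b : selfAdjoint A, tildeL L b ≤ L b) ∧
    LowerSemicontinuous (tildeL L) ∧
    ∀ φ ψ : A →L[ℂ] ℂ, IsState φ → IsState ψ →
      dL (tildeL L) ⇑φ ⇑ψ = dL L ⇑φ ⇑ψ := by
  have hle : ∀ b : selfAdjoint A, tildeL L b ≤ L b := by
    intro b
    apply le_of_forall_gt_imp_ge_of_dense
    intro C hC
    by_cases hCt : C = ⊤
    · exact hCt ▸ le_top
    · have h0 : C ≠ 0 := ((zero_le (a := L b)).trans_lt hC).ne'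
      exact sInf_le ⟨((zero_le (a := L b)).trans_lt hC), hCt,
        fun φ ψ _ _ => key_scale L hL b h0 hCt hC.le φ ψ⟩
  refine ⟨hle, ?_, ?_⟩
  · have : tildeL L = fun b : selfAdjoint A => ⨆ φ : {φ : A →L[ℂ] ℂ // IsState φ},
        ⨆ ψ : {ψ : A →L[ℂ] ℂ // IsState ψ},
        (‖φ.1 (b : A) - ψ.1 (b : A)‖₊ : ℝ≥0∞) / dL L ⇑φ.1 ⇑ψ.1 :=
      funext fun b => tildeL_eq_sup L b
    rw [this]
    exact lowerSemicontinuous_iSup fun φ => lowerSemicontinuous_iSup fun ψ =>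
      lsc_aux L φ.1 ψ.1
  · intro φ ψ hφ hψ
    apply le_antisymm
    · apply iSup_le
      rintro ⟨b, hb⟩
      have h1 : (‖φ (b : A) - ψ (b : A)‖₊ : ℝ≥0∞) / dL L ⇑φ ⇑ψ ≤ 1 := by
        refine le_trans ?_ ((tildeL_eq_sup L b ▸ hb))
        refine le_trans ?_ (le_iSup _ (⟨φ, hφ⟩ : {φ : A →L[ℂ] ℂ // IsState φ}))
        exact le_iSup (fun ψ' : {ψ : A →L[ℂ] ℂ // IsState ψ} =>
          (‖φ (b : A) - ψ'.1 (b : A)‖₊ : ℝ≥0∞) / dL L ⇑φ ⇑ψ'.1) ⟨ψ, hψ⟩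
      have := (ENNReal.div_le_iff_le_mul (Or.inr (by simp : (1:ℝ≥0∞) ≠ ⊤))
        (Or.inr (by simp : (1:ℝ≥0∞) ≠ 0))).1 h1
      rwa [one_mul] at this
    · apply iSup_le
      rintro ⟨b, hb⟩
      exact le_iSup (fun x : {b : selfAdjoint A // tildeL L b ≤ 1} =>
        (‖φ (x.1 : A) - ψ (x.1 : A)‖₊ : ℝ≥0∞)) ⟨b, (hle b).trans hb⟩
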